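/- Let a > b > 0, let A be a complex n×n matrix whose spectrum belongs to E_i = {λ ∈ ℂ : (Re λ)²/a² + (Im λ)²/b² < 1}, and let H be a Hermitian positive definite matrix satisfying H − (1/(2a²) + 1/(2b²))·A*HA − (1/(4a²) − 1/(4b²))·(HA² + (A*)²H) = I. If B is a complex n×n matrix with ‖B‖ < √(‖A‖² + b²/‖H‖) − ‖A‖ (operator norm), then for every complex n×n matrix C the equation K − (1/(2a²) + 1/(2b²))·(A+B)*K(A+B) − (1/(4a²) − 1/(4b²))·(K(A+B)² + ((A+B)*)²K) = C has a unique solution K. -/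

import Mathlib

open Matrix
open scoped ComplexOrder Matrix.Norms.L2Operator

namespace PerturbAux


variable {n : ℕ}

noncomputable def en (v : Fin n → ℂ) : ℝ := ‖(WithLp.equiv 2 (Fin n → ℂ)).symm v‖

lemma en_nonneg (v : Fin n → ℂ) : 0 ≤ en v := norm_nonneg _

lemma en_pos {v : Fin n → ℂ} (hv : v ≠ 0) : 0 < en v := by
  rw [en, norm_pos_iff]; simpa using hv

lemma dot_self (v : Fin n → ℂ) : star v ⬝ᵥ v = ((en v : ℝ) : ℂ) ^ 2 := by
  rw [dotProduct_comm, ← EuclideanSpace.inner_toLp_toLp]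
  exact inner_self_eq_norm_sq_to_K _

lemma cs (x y : Fin n → ℂ) : ‖star x ⬝ᵥ y‖ ≤ en x * en y := by
  rw [dotProduct_comm, ← EuclideanSpace.inner_toLp_toLp]
  exact norm_inner_le_norm _ _

lemma en_mulVec (M : Matrix (Fin n) (Fin n) ℂ) (v : Fin n → ℂ) :
    en (M *ᵥ v) ≤ ‖M‖ * en v :=
  M.l2_opNorm_mulVec (WithLp.toLp 2 v)

lemma en_smul (c : ℂ) (v : Fin n → ℂ) : en (c • v) = ‖c‖ * en v := by
  rw [en, en, ← norm_smul]; rfl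

lemma en_add_le (x y : Fin n → ℂ) : en (x + y) ≤ en x + en y := norm_add_le _ _

lemma mem_spectrum_iff_exists (M : Matrix (Fin n) (Fin n) ℂ) (μ : ℂ) :
    μ ∈ spectrum ℂ M ↔ ∃ v, v ≠ 0 ∧ M *ᵥ v = μ • v := by
  classical
  rw [spectrum.mem_iff, Matrix.isUnit_iff_isUnit_det, isUnit_iff_ne_zero, not_not,
    ← Matrix.exists_mulVec_eq_zero_iff]
  have key : ∀ v : Fin n → ℂ, (algebraMap ℂ (Matrix (Fin n) (Fin n) ℂ) μ - M) *ᵥ v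
      = μ • v - M *ᵥ v := by
    intro v
    rw [Matrix.sub_mulVec, Algebra.algebraMap_eq_smul_one, Matrix.smul_mulVec,
      Matrix.one_mulVec]
  constructor
  · rintro ⟨v, hv, h⟩
    refine ⟨v, hv, ?_⟩
    rw [key] at h
    rw [← sub_eq_zero]
    linear_combination (norm := module) -h
  · rintro ⟨v, hv, h⟩
    exact ⟨v, hv, by rw [key, h, sub_self]⟩

set_option maxHeartbeats 3000000 in
/-- Step 1: the spectrum of the perturbed matrix stays in the open ellipse. -/
lemma spec_in_ellipse {a b : ℝ} (hba : b < a) (hb : 0 < b)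
    (A H B : Matrix (Fin n) (Fin n) ℂ) (hH : H.PosDef)
    (heq : H - ((1 / (2 * a ^ 2) + 1 / (2 * b ^ 2) : ℝ) : ℂ) • (Aᴴ * H * A)
      - ((1 / (4 * a ^ 2) - 1 / (4 * b ^ 2) : ℝ) : ℂ) • (H * A ^ 2 + Aᴴ ^ 2 * H) = 1)
    (hB : ‖B‖ < Real.sqrt (‖A‖ ^ 2 + b ^ 2 / ‖H‖) - ‖A‖) :
    ∀ μ ∈ spectrum ℂ (A + B), μ.re ^ 2 / a ^ 2 + μ.im ^ 2 / b ^ 2 < 1 := by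
  have ha : 0 < a := hb.trans hba
  intro μ hmem
  by_contra hout
  push_neg at hout
  obtain ⟨v, hv0, hev⟩ := (mem_spectrum_iff_exists _ _).mp hmem
  set pa : ℝ := 1 / (2 * a ^ 2) + 1 / (2 * b ^ 2) with hpa
  set pb : ℝ := 1 / (4 * a ^ 2) - 1 / (4 * b ^ 2) with hpb
  set w : Fin n → ℂ := B *ᵥ v with hw
  set u : Fin n → ℂ := A *ᵥ v with hu
  have huw : u = μ • v - w := by
    rw [eq_sub_iff_add_eq, hu, hw, ← Matrix.add_mulVec, hev]
  have hherm : ∀ x y : Fin n → ℂ, star x ⬝ᵥ (H *ᵥ y) = star (star y ⬝ᵥ (H *ᵥ x)) := by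
    intro x y
    rw [Matrix.star_dotProduct, Matrix.star_mulVec, ← Matrix.dotProduct_mulVec,
      hH.isHermitian.eq]
  have hadj : ∀ (N : Matrix (Fin n) (Fin n) ℂ) (x y : Fin n → ℂ),
      star x ⬝ᵥ (Nᴴ *ᵥ y) = star (N *ᵥ x) ⬝ᵥ y := by
    intro N x y
    rw [Matrix.star_mulVec, ← Matrix.dotProduct_mulVec]
  set t1 : ℂ := star v ⬝ᵥ (H *ᵥ v) with ht1def
  set c : ℂ := star v ⬝ᵥ (H *ᵥ w) with hcdef
  set d : ℂ := star v ⬝ᵥ (H *ᵥ (A *ᵥ w)) with hddef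
  set g : ℂ := star u ⬝ᵥ (H *ᵥ w) with hgdef
  -- t1 is real
  have ht1star : (starRingEnd ℂ) t1 = t1 := (hherm v v).symm
  have ht1 : t1 = ((t1.re : ℝ) : ℂ) := (Complex.conj_eq_iff_re.mp ht1star).symm
  set T : ℝ := t1.re with hT
  -- basic vector identities
  have hHu : H *ᵥ u = μ • (H *ᵥ v) - H *ᵥ w := by
    conv_lhs => rw [huw]
    rw [Matrix.mulVec_sub, Matrix.mulVec_smul]
  have hvu : star v ⬝ᵥ (H *ᵥ u) = μ * t1 - c := by
    rw [hHu, dotProduct_sub, dotProduct_smul, smul_eq_mul]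
  have huv : star u ⬝ᵥ (H *ᵥ v) = (starRingEnd ℂ) μ * t1 - (starRingEnd ℂ) c := by
    rw [hherm u v, hvu, show star (μ * t1 - c) = (starRingEnd ℂ) (μ * t1 - c) from rfl,
      _root_.map_sub, _root_.map_mul, ht1star]
  have hAu : A *ᵥ u = μ • u - A *ᵥ w := by
    conv_lhs => rw [huw]
    rw [Matrix.mulVec_sub, Matrix.mulVec_smul]
  have hT2 : star v ⬝ᵥ ((Aᴴ * H * A) *ᵥ v) = μ * ((starRingEnd ℂ) μ * t1 - (starRingEnd ℂ) c) - g := by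
    have h1 : (Aᴴ * H * A) *ᵥ v = Aᴴ *ᵥ (H *ᵥ u) := by
      rw [hu, Matrix.mulVec_mulVec, Matrix.mulVec_mulVec]
    rw [h1, hadj A v (H *ᵥ u), ← hu, hHu, dotProduct_sub, dotProduct_smul, smul_eq_mul, huv,
      ← hgdef]
  have hT3' : star v ⬝ᵥ (H *ᵥ (A *ᵥ u)) = μ * (μ * t1 - c) - d := by
    rw [hAu, Matrix.mulVec_sub, Matrix.mulVec_smul, dotProduct_sub, dotProduct_smul,
      smul_eq_mul, hvu, ← hddef]
  have hT3 : star v ⬝ᵥ ((H * A ^ 2) *ᵥ v) = μ * (μ * t1 - c) - d := by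
    have h1 : (H * A ^ 2) *ᵥ v = H *ᵥ (A *ᵥ u) := by
      rw [hu, Matrix.mulVec_mulVec, Matrix.mulVec_mulVec, pow_two, Matrix.mul_assoc]
    rw [h1, hT3']
  have hT4 : star v ⬝ᵥ ((Aᴴ ^ 2 * H) *ᵥ v) = star (μ * (μ * t1 - c) - d) := by
    have h1 : (Aᴴ ^ 2 * H) *ᵥ v = Aᴴ *ᵥ (Aᴴ *ᵥ (H *ᵥ v)) := by
      rw [Matrix.mulVec_mulVec, Matrix.mulVec_mulVec, pow_two, Matrix.mul_assoc]
    rw [h1, hadj A v _, ← hu, hadj A u _, hherm (A *ᵥ u) v, hT3']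
  -- pairing the matrix identity with v
  have main : t1 - (pa : ℂ) * (μ * ((starRingEnd ℂ) μ * t1 - (starRingEnd ℂ) c) - g)
      - (pb : ℂ) * ((μ * (μ * t1 - c) - d) + star (μ * (μ * t1 - c) - d))
      = ((en v : ℝ) : ℂ) ^ 2 := by
    have hm := congrArg (fun X : Matrix (Fin n) (Fin n) ℂ => star v ⬝ᵥ (X *ᵥ v)) heq
    simp only [Matrix.sub_mulVec, Matrix.smul_mulVec, Matrix.one_mulVec,
      dotProduct_sub, dotProduct_smul, smul_eq_mul, dotProduct_add, Matrix.add_mulVec] at hm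
    rw [hT2, hT3, hT4, ← ht1def] at hm
    rw [hm, dot_self]
  -- real part of the identity
  have hre := congrArg Complex.re main
  simp only [Complex.sub_re, Complex.add_re, Complex.mul_re, Complex.ofReal_re,
    Complex.ofReal_im, Complex.conj_re, Complex.conj_im, Complex.sub_im, Complex.add_im,
    Complex.mul_im, Complex.ofReal_pow, zero_mul, mul_zero, sub_zero, zero_sub, zero_add,
    Complex.star_def] at hre
  rw [← Complex.ofReal_pow, Complex.ofReal_re] at hre
  have ht1im : t1.im = 0 := by rw [ht1]; exact Complex.ofReal_im T
  rw [ht1im] at hre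
  simp only [mul_zero, zero_mul, sub_zero, add_zero, neg_zero, zero_add, neg_mul, neg_neg,
    mul_neg, sub_neg_eq_add] at hre
  -- clean real identity
  have f1 : en v ^ 2 = T * (1 - pa * (μ.re ^ 2 + μ.im ^ 2) - 2 * pb * (μ.re ^ 2 - μ.im ^ 2))
      + pa * ((μ * (starRingEnd ℂ) c).re + g.re) + 2 * pb * ((μ * c).re + d.re) := by
    simp only [Complex.mul_re, Complex.conj_re, Complex.conj_im]
    linear_combination -hre
  -- the quadratic form coefficient
  have hcoef : pa * (μ.re ^ 2 + μ.im ^ 2) + 2 * pb * (μ.re ^ 2 - μ.im ^ 2)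
      = μ.re ^ 2 / a ^ 2 + μ.im ^ 2 / b ^ 2 := by
    simp only [hpa, hpb]; field_simp; ring
  have hT0 : 0 ≤ T := by
    have h0 := hH.posSemidef.dotProduct_mulVec_nonneg v
    have := (Complex.le_def.mp h0).1
    simpa using this
  -- norms
  set V : ℝ := en v with hV
  set P : ℝ := en w with hP'
  have hVpos : 0 < V := en_pos hv0
  have hP0 : 0 ≤ P := en_nonneg w
  have hHP0 : 0 ≤ ‖H‖ * P := mul_nonneg (norm_nonneg H) hP0
  have hc : ‖c‖ ≤ V * (‖H‖ * P) :=
    le_trans (cs v (H *ᵥ w)) (mul_le_mul_of_nonneg_left (en_mulVec H w) (en_nonneg v))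
  have hd : ‖d‖ ≤ V * (‖H‖ * (‖A‖ * P)) := by
    refine le_trans (cs v (H *ᵥ (A *ᵥ w))) (mul_le_mul_of_nonneg_left ?_ (en_nonneg v))
    refine le_trans (en_mulVec H (A *ᵥ w)) (mul_le_mul_of_nonneg_left ?_ (norm_nonneg H))
    exact en_mulVec A w
  have hEu : en u ≤ ‖A‖ * V := en_mulVec A v
  have hg : ‖g‖ ≤ (‖A‖ * V) * (‖H‖ * P) := by
    refine le_trans (cs u (H *ᵥ w)) ?_
    exact mul_le_mul hEu (en_mulVec H w) (en_nonneg _) (mul_nonneg (norm_nonneg A) hVpos.le)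
  have hμV : ‖μ‖ * V ≤ ‖A‖ * V + P := by
    have h1 : μ • v = u + w := by rw [huw]; abel
    calc ‖μ‖ * V = en (μ • v) := (en_smul μ v).symm
      _ = en (u + w) := by rw [h1]
      _ ≤ en u + en w := en_add_le u w
      _ ≤ ‖A‖ * V + P := by exact add_le_add hEu le_rfl
  have hPB : P ≤ ‖B‖ * V := en_mulVec B v
  -- real part bounds
  have hrle : ∀ z : ℂ, z.re ≤ ‖z‖ := fun z => by
    exact Complex.re_le_norm z
  have e_r1 : (μ * (starRingEnd ℂ) c).re ≤ (‖A‖ * V + P) * (‖H‖ * P) := by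
    calc (μ * (starRingEnd ℂ) c).re ≤ ‖μ * (starRingEnd ℂ) c‖ := hrle _
      _ = ‖μ‖ * ‖c‖ := by rw [norm_mul, RCLike.norm_conj]
      _ ≤ ‖μ‖ * (V * (‖H‖ * P)) := mul_le_mul_of_nonneg_left hc (norm_nonneg μ)
      _ = (‖μ‖ * V) * (‖H‖ * P) := by ring
      _ ≤ (‖A‖ * V + P) * (‖H‖ * P) := mul_le_mul_of_nonneg_right hμV hHP0
  have e_r2 : g.re ≤ (‖A‖ * V) * (‖H‖ * P) := le_trans (hrle g) hg
  have e_r3 : -((μ * c).re) ≤ (‖A‖ * V + P) * (‖H‖ * P) := by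
    calc -((μ * c).re) = (-(μ * c)).re := by rw [Complex.neg_re]
      _ ≤ ‖-(μ * c)‖ := hrle _
      _ = ‖μ‖ * ‖c‖ := by rw [norm_neg, norm_mul]
      _ ≤ ‖μ‖ * (V * (‖H‖ * P)) := mul_le_mul_of_nonneg_left hc (norm_nonneg μ)
      _ = (‖μ‖ * V) * (‖H‖ * P) := by ring
      _ ≤ (‖A‖ * V + P) * (‖H‖ * P) := mul_le_mul_of_nonneg_right hμV hHP0
  have e_r4 : -(d.re) ≤ V * (‖H‖ * (‖A‖ * P)) := by
    calc -(d.re) = (-d).re := by rw [Complex.neg_re]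
      _ ≤ ‖-d‖ := hrle _
      _ = ‖d‖ := norm_neg d
      _ ≤ V * (‖H‖ * (‖A‖ * P)) := hd
  clear_value pa pb w u t1 c d g T V P
  clear heq hmem hev hherm hadj hHu hvu huv hAu hT2 hT3' hT3 hT4 main hre ht1star ht1
    ht1im huw hw hu ht1def hcdef hddef hgdef hrle hc hd hg hEu hμV 
  have fF : 1 - pa * (μ.re ^ 2 + μ.im ^ 2) - 2 * pb * (μ.re ^ 2 - μ.im ^ 2) ≤ 0 := by
    linarith [hcoef, hout]
  -- sign facts
  have hpa0 : 0 < pa := by rw [hpa]; positivity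
  have hpbneg : 0 ≤ -pb := by
    rw [hpb]
    have h1 : 1 / (4 * a ^ 2) ≤ 1 / (4 * b ^ 2) := by
      apply one_div_le_one_div_of_le (by positivity)
      nlinarith
    linarith
  set Q : ℝ := (2 * (‖A‖ * V) + P) * (‖H‖ * P) with hQ
  have e_ra : (μ * (starRingEnd ℂ) c).re + g.re ≤ Q := by rw [hQ]; nlinarith [e_r1, e_r2]
  have e_rb : -((μ * c).re + d.re) ≤ Q := by rw [hQ]; nlinarith [e_r3, e_r4]
  have hstep0 : V ^ 2 ≤ pa * ((μ * (starRingEnd ℂ) c).re + g.re)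
      + 2 * pb * ((μ * c).re + d.re) := by
    have hTF := mul_nonneg hT0 (neg_nonneg.mpr fF)
    linarith [f1, hTF]
  have m1 := mul_le_mul_of_nonneg_left e_ra hpa0.le
  have m2 := mul_le_mul_of_nonneg_left e_rb hpbneg
  have hstep : V ^ 2 ≤ (pa - 2 * pb) * Q := by ring_nf; ring_nf at hstep0 m1 m2; linarith [hstep0, m1, m2]
  have hpasum : pa - 2 * pb = 1 / b ^ 2 := by rw [hpa, hpb]; field_simp; ring
  rw [hpasum] at hstep
  have hQle : Q ≤ ‖H‖ * (2 * ‖A‖ * ‖B‖ + ‖B‖ ^ 2) * V ^ 2 := by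
    have q1 : 2 * (‖A‖ * V) + P ≤ (2 * ‖A‖ + ‖B‖) * V := by nlinarith [hPB]
    have q2 : ‖H‖ * P ≤ ‖H‖ * (‖B‖ * V) := mul_le_mul_of_nonneg_left hPB (norm_nonneg H)
    have q3 : Q ≤ ((2 * ‖A‖ + ‖B‖) * V) * (‖H‖ * (‖B‖ * V)) := by
      rw [hQ]
      apply mul_le_mul q1 q2 hHP0 (by positivity)
    nlinarith [q3]
  have hb2' : b ^ 2 ≤ ‖H‖ * (2 * ‖A‖ * ‖B‖ + ‖B‖ ^ 2) := by
    have hbne : (b:ℝ) ^ 2 ≠ 0 := by positivity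
    have h1 : b ^ 2 * V ^ 2 ≤ Q := by
      have := mul_le_mul_of_nonneg_left hstep (by positivity : (0:ℝ) ≤ b ^ 2)
      calc b ^ 2 * V ^ 2 ≤ b ^ 2 * (1 / b ^ 2 * Q) := this
        _ = Q := by field_simp
    have h2 : b ^ 2 * V ^ 2 ≤ ‖H‖ * (2 * ‖A‖ * ‖B‖ + ‖B‖ ^ 2) * V ^ 2 := le_trans h1 hQle
    exact le_of_mul_le_mul_right (by nlinarith [h2]) (by positivity : (0:ℝ) < V ^ 2)
  have hH0 : 0 < ‖H‖ := by
    rcases lt_or_eq_of_le (norm_nonneg H) with h | h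
    · exact h
    · exfalso; rw [← h] at hb2'; nlinarith [hb2', hb]
  have hdiv : b ^ 2 / ‖H‖ ≤ 2 * ‖A‖ * ‖B‖ + ‖B‖ ^ 2 := by
    rw [div_le_iff₀ hH0]; linarith [hb2']
  have hsq : ‖A‖ ^ 2 + b ^ 2 / ‖H‖ ≤ (‖A‖ + ‖B‖) ^ 2 := by nlinarith [hdiv]
  have hsqrt : Real.sqrt (‖A‖ ^ 2 + b ^ 2 / ‖H‖) ≤ ‖A‖ + ‖B‖ := by
    rw [show ‖A‖ + ‖B‖ = Real.sqrt ((‖A‖ + ‖B‖) ^ 2) from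
      (Real.sqrt_sq (by positivity)).symm]
    exact Real.sqrt_le_sqrt hsq
  linarith [hB, hsqrt]


lemma star_mem_spectrum {M : Matrix (Fin n) (Fin n) ℂ} {μ : ℂ}
    (h : μ ∈ spectrum ℂ Mᴴ) : (starRingEnd ℂ) μ ∈ spectrum ℂ M := by
  rw [spectrum.mem_iff] at h ⊢
  intro hu
  apply h
  have h2 := hu.star
  have : star (algebraMap ℂ (Matrix (Fin n) (Fin n) ℂ) ((starRingEnd ℂ) μ) - M)
      = algebraMap ℂ (Matrix (Fin n) (Fin n) ℂ) μ - Mᴴ := by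
    rw [star_sub, Algebra.algebraMap_eq_smul_one, Algebra.algebraMap_eq_smul_one,
      star_smul, star_one, Matrix.star_eq_conjTranspose, Complex.star_def,
      Complex.conj_conj]
  rwa [this] at h2

lemma mem_spectrum_of_transpose {M : Matrix (Fin n) (Fin n) ℂ} {μ : ℂ}
    (h : μ ∈ spectrum ℂ Mᵀ) : μ ∈ spectrum ℂ M := by
  classical
  rw [spectrum.mem_iff] at h ⊢
  intro hu
  apply h
  have : (algebraMap ℂ (Matrix (Fin n) (Fin n) ℂ) μ - M)ᵀ
      = algebraMap ℂ (Matrix (Fin n) (Fin n) ℂ) μ - Mᵀ := by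
    rw [Algebra.algebraMap_eq_smul_one, Matrix.transpose_sub, Matrix.transpose_smul,
      Matrix.transpose_one]
  rw [← this]
  rwa [Matrix.isUnit_transpose]

lemma exists_eigen_of_invariant {V : Type*} [AddCommGroup V] [Module ℂ V]
    [FiniteDimensional ℂ V] (p : Submodule ℂ V) (hp : p ≠ ⊥) (f : V →ₗ[ℂ] V)
    (hf : ∀ x ∈ p, f x ∈ p) :
    ∃ (μ : ℂ) (x : V), x ∈ p ∧ x ≠ 0 ∧ f x = μ • x := by
  haveI : Nontrivial p := Submodule.nontrivial_iff_ne_bot.mpr hp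
  obtain ⟨μ, hμ⟩ := Module.End.exists_eigenvalue (f.restrict hf)
  obtain ⟨x, hx⟩ := hμ.exists_hasEigenvector
  refine ⟨μ, (x : V), x.2, ?_, ?_⟩
  · exact fun h => hx.2 (Subtype.ext h)
  · have h1 := hx.apply_eq_smul
    have := congrArg (Subtype.val) h1
    simpa [LinearMap.restrict_apply] using this

lemma scalar_pos {a b x₁ y₁ x₂ y₂ : ℝ} (hba : b < a) (hb : 0 < b)
    (h1 : x₁ ^ 2 / a ^ 2 + y₁ ^ 2 / b ^ 2 < 1) (h2 : x₂ ^ 2 / a ^ 2 + y₂ ^ 2 / b ^ 2 < 1) :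
    0 < 1 - ((1 / (2 * a ^ 2) + 1 / (2 * b ^ 2)) * (x₁ * x₂ - y₁ * y₂)
      + (1 / (4 * a ^ 2) - 1 / (4 * b ^ 2)) * (x₁ ^ 2 - y₁ ^ 2 + x₂ ^ 2 - y₂ ^ 2)) := by
  have ha : 0 < a := hb.trans hba
  have ha2 : (0:ℝ) < a ^ 2 := by positivity
  have hb2 : (0:ℝ) < b ^ 2 := by positivity
  have h1' : x₁ ^ 2 * b ^ 2 + y₁ ^ 2 * a ^ 2 < a ^ 2 * b ^ 2 := by
    have := h1
    rw [div_add_div _ _ (ne_of_gt ha2) (ne_of_gt hb2), div_lt_one (by positivity)] at this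
    linarith
  have h2' : x₂ ^ 2 * b ^ 2 + y₂ ^ 2 * a ^ 2 < a ^ 2 * b ^ 2 := by
    have := h2
    rw [div_add_div _ _ (ne_of_gt ha2) (ne_of_gt hb2), div_lt_one (by positivity)] at this
    linarith
  have key : 0 < 4 * (a ^ 2 * b ^ 2) - ((2 * b ^ 2 + 2 * a ^ 2) * (x₁ * x₂ - y₁ * y₂)
      + (b ^ 2 - a ^ 2) * (x₁ ^ 2 - y₁ ^ 2 + x₂ ^ 2 - y₂ ^ 2)) := by
    nlinarith [mul_nonneg (le_of_lt hb2) (sq_nonneg (x₁ - x₂)),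
      mul_nonneg (le_of_lt hb2) (sq_nonneg (y₁ + y₂)),
      mul_nonneg (le_of_lt ha2) (sq_nonneg (x₁ - x₂)),
      mul_nonneg (le_of_lt ha2) (sq_nonneg (y₁ + y₂))]
  have hrw : 1 - ((1 / (2 * a ^ 2) + 1 / (2 * b ^ 2)) * (x₁ * x₂ - y₁ * y₂)
      + (1 / (4 * a ^ 2) - 1 / (4 * b ^ 2)) * (x₁ ^ 2 - y₁ ^ 2 + x₂ ^ 2 - y₂ ^ 2))
      = (4 * (a ^ 2 * b ^ 2) - ((2 * b ^ 2 + 2 * a ^ 2) * (x₁ * x₂ - y₁ * y₂)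
        + (b ^ 2 - a ^ 2) * (x₁ ^ 2 - y₁ ^ 2 + x₂ ^ 2 - y₂ ^ 2))) / (4 * (a ^ 2 * b ^ 2)) := by
    field_simp
    ring
  rw [hrw]
  positivity


end PerturbAux

open PerturbAux

/-- Under the norm-perturbation condition for the interior of the ellipse, the
elliptic Lyapunov-type equation for the perturbed matrix `A + B` is uniquely
solvable for every right-hand side `C`. -/
theorem perturbed_ellipse_equation_unique_solvable {n : ℕ} (a b : ℝ) (hba : b < a) (hb : 0 < b)
    (A : Matrix (Fin n) (Fin n) ℂ)
    (hA : ∀ μ ∈ spectrum ℂ A, μ.re ^ 2 / a ^ 2 + μ.im ^ 2 / b ^ 2 < 1)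
    (H : Matrix (Fin n) (Fin n) ℂ) (hH : H.PosDef)
    (heq : H - ((1 / (2 * a ^ 2) + 1 / (2 * b ^ 2) : ℝ) : ℂ) • (Aᴴ * H * A)
      - ((1 / (4 * a ^ 2) - 1 / (4 * b ^ 2) : ℝ) : ℂ) • (H * A ^ 2 + Aᴴ ^ 2 * H) = 1)
    (B : Matrix (Fin n) (Fin n) ℂ)
    (hB : ‖B‖ < Real.sqrt (‖A‖ ^ 2 + b ^ 2 / ‖H‖) - ‖A‖) :
    ∀ C : Matrix (Fin n) (Fin n) ℂ,
      ∃! K : Matrix (Fin n) (Fin n) ℂ,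
        K - ((1 / (2 * a ^ 2) + 1 / (2 * b ^ 2) : ℝ) : ℂ) • ((A + B)ᴴ * K * (A + B))
          - ((1 / (4 * a ^ 2) - 1 / (4 * b ^ 2) : ℝ) : ℂ) •
            (K * (A + B) ^ 2 + ((A + B)ᴴ) ^ 2 * K) = C := by
  intro C
  have hell := spec_in_ellipse hba hb A H B hH heq hB
  set M : Matrix (Fin n) (Fin n) ℂ := A + B with hM
  set pa' : ℂ := ((1 / (2 * a ^ 2) + 1 / (2 * b ^ 2) : ℝ) : ℂ) with hpa'
  set pb' : ℂ := ((1 / (4 * a ^ 2) - 1 / (4 * b ^ 2) : ℝ) : ℂ) with hpb'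
  set l : Matrix (Fin n) (Fin n) ℂ →ₗ[ℂ] Matrix (Fin n) (Fin n) ℂ :=
    LinearMap.mulLeft ℂ Mᴴ with hl
  set r : Matrix (Fin n) (Fin n) ℂ →ₗ[ℂ] Matrix (Fin n) (Fin n) ℂ :=
    LinearMap.mulRight ℂ M with hr
  set L : Matrix (Fin n) (Fin n) ℂ →ₗ[ℂ] Matrix (Fin n) (Fin n) ℂ :=
    LinearMap.id - pa' • (l ∘ₗ r) - pb' • (r ∘ₗ r) - pb' • (l ∘ₗ l) with hLdef
  have hLapp : ∀ K : Matrix (Fin n) (Fin n) ℂ,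
      L K = K - pa' • (Mᴴ * K * M) - pb' • (K * M ^ 2 + Mᴴ ^ 2 * K) := by
    intro K
    simp only [hLdef, hl, hr, LinearMap.sub_apply, LinearMap.smul_apply, LinearMap.comp_apply,
      LinearMap.id_apply, LinearMap.mulLeft_apply, LinearMap.mulRight_apply]
    simp only [pow_two, Matrix.mul_assoc, smul_add, sub_add_eq_sub_sub]
  have hcomm_l : ∀ x, L (Mᴴ * x) = Mᴴ * L x := by
    intro x
    simp only [hLapp, Matrix.mul_sub, Matrix.mul_smul, Matrix.mul_add, pow_two,
      Matrix.mul_assoc, smul_add, sub_add_eq_sub_sub]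
  have hcomm_r : ∀ x, L (x * M) = L x * M := by
    intro x
    simp only [hLapp, Matrix.sub_mul, Matrix.smul_mul, Matrix.add_mul, pow_two,
      Matrix.mul_assoc, smul_add, sub_add_eq_sub_sub]
  have hinj : Function.Injective L := by
    rw [← LinearMap.ker_eq_bot]
    by_contra hker
    have hlker : ∀ x ∈ LinearMap.ker L, l x ∈ LinearMap.ker L := by
      intro x hx
      rw [LinearMap.mem_ker] at hx ⊢
      rw [hl, LinearMap.mulLeft_apply, hcomm_l, hx, Matrix.mul_zero]
    obtain ⟨μ, u, huL, hu0, hul⟩ := exists_eigen_of_invariant _ hker l hlker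
    rw [hl, LinearMap.mulLeft_apply] at hul
    set p2 : Submodule ℂ (Matrix (Fin n) (Fin n) ℂ) :=
      LinearMap.ker L ⊓ LinearMap.ker (l - μ • LinearMap.id) with hp2
    have hu2 : u ∈ p2 := by
      refine Submodule.mem_inf.mpr ⟨huL, ?_⟩
      rw [LinearMap.mem_ker, LinearMap.sub_apply, LinearMap.smul_apply, LinearMap.id_apply,
        hl, LinearMap.mulLeft_apply, hul, sub_self]
    have hp2ne : p2 ≠ ⊥ := Submodule.ne_bot_iff _ |>.mpr ⟨u, hu2, hu0⟩
    have hrp2 : ∀ x ∈ p2, r x ∈ p2 := by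
      intro x hx
      obtain ⟨hx1, hx2⟩ := Submodule.mem_inf.mp hx
      rw [LinearMap.mem_ker] at hx1
      rw [LinearMap.mem_ker, LinearMap.sub_apply, LinearMap.smul_apply, LinearMap.id_apply,
        hl, LinearMap.mulLeft_apply] at hx2
      have hx2' : Mᴴ * x = μ • x := by
        have := sub_eq_zero.mp hx2
        exact this
      refine Submodule.mem_inf.mpr ⟨?_, ?_⟩
      · rw [LinearMap.mem_ker, hr, LinearMap.mulRight_apply, hcomm_r, hx1, Matrix.zero_mul]
      · rw [LinearMap.mem_ker, LinearMap.sub_apply, LinearMap.smul_apply, LinearMap.id_apply,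
          hl, LinearMap.mulLeft_apply, hr, LinearMap.mulRight_apply,
          ← Matrix.mul_assoc, hx2', Matrix.smul_mul, sub_self]
    obtain ⟨lam, K₀, hK₀2, hK₀0, hKr⟩ := exists_eigen_of_invariant _ hp2ne r hrp2
    rw [hr, LinearMap.mulRight_apply] at hKr
    obtain ⟨hK₀L, hK₀l⟩ := Submodule.mem_inf.mp hK₀2
    rw [LinearMap.mem_ker] at hK₀L
    rw [LinearMap.mem_ker, LinearMap.sub_apply, LinearMap.smul_apply, LinearMap.id_apply,
      hl, LinearMap.mulLeft_apply] at hK₀l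
    have hKl : Mᴴ * K₀ = μ • K₀ := sub_eq_zero.mp hK₀l
    -- scalar relation
    have hzero : (1 - pa' * (lam * μ) - pb' * (lam ^ 2 + μ ^ 2)) • K₀ = 0 := by
      have h0 := hK₀L
      rw [hLapp] at h0
      have e1 : Mᴴ * K₀ * M = (lam * μ) • K₀ := by
        rw [Matrix.mul_assoc, hKr, Matrix.mul_smul, hKl, smul_smul]
      have e2 : K₀ * M ^ 2 = (lam * lam) • K₀ := by
        rw [pow_two, ← Matrix.mul_assoc, hKr, Matrix.smul_mul, hKr, smul_smul]
      have e3 : Mᴴ ^ 2 * K₀ = (μ * μ) • K₀ := by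
        rw [pow_two, Matrix.mul_assoc, hKl, Matrix.mul_smul, hKl, smul_smul]
      rw [e1, e2, e3] at h0
      linear_combination (norm := module) h0
    have hscal : 1 - pa' * (lam * μ) - pb' * (lam ^ 2 + μ ^ 2) = 0 := by
      rcases smul_eq_zero.mp hzero with h | h
      · exact h
      · exact absurd h hK₀0
    -- eigenvalues of M
    obtain ⟨i, j, hij⟩ : ∃ i j, K₀ i j ≠ 0 := by
      by_contra hc
      push_neg at hc
      exact hK₀0 (by ext i j; exact hc i j)
    have hrowne : (fun k => K₀ i k) ≠ 0 := by
      intro h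
      exact hij (congrFun h j)
    have hcolne : (fun k => K₀ k j) ≠ 0 := by
      intro h
      exact hij (congrFun h i)
    have hrow : Mᵀ *ᵥ (fun k => K₀ i k) = lam • (fun k => K₀ i k) := by
      funext j'
      have h1 := congrFun (congrFun hKr i) j'
      simp only [Matrix.mul_apply, Matrix.smul_apply, smul_eq_mul] at h1
      simpa [Matrix.mulVec, dotProduct, Matrix.transpose_apply, mul_comm] using h1
    have hcol : Mᴴ *ᵥ (fun k => K₀ k j) = μ • (fun k => K₀ k j) := by
      funext i'
      have h1 := congrFun (congrFun hKl i') j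
      simp only [Matrix.mul_apply, Matrix.smul_apply, smul_eq_mul] at h1
      simpa [Matrix.mulVec, dotProduct] using h1
    have hlam : lam ∈ spectrum ℂ M :=
      mem_spectrum_of_transpose ((mem_spectrum_iff_exists _ _).mpr ⟨_, hrowne, hrow⟩)
    have hmu : (starRingEnd ℂ) μ ∈ spectrum ℂ M :=
      star_mem_spectrum ((mem_spectrum_iff_exists _ _).mpr ⟨_, hcolne, hcol⟩)
    have h2 := hell _ hlam
    have h1 := hell _ hmu
    have h1' : μ.re ^ 2 / a ^ 2 + μ.im ^ 2 / b ^ 2 < 1 := by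
      simpa [Complex.conj_re, Complex.conj_im, neg_sq] using h1
    have hpos := scalar_pos hba hb h1' h2
    have hre0 := congrArg Complex.re hscal
    rw [hpa', hpb'] at hre0
    simp only [Complex.sub_re, Complex.one_re, Complex.mul_re, Complex.add_re, Complex.add_im,
      Complex.ofReal_re, Complex.ofReal_im, Complex.mul_im, Complex.zero_re, zero_mul,
      sub_zero, pow_two] at hre0
    have hX : 1 - ((1 / (2 * a ^ 2) + 1 / (2 * b ^ 2)) * (μ.re * lam.re - μ.im * lam.im)
        + (1 / (4 * a ^ 2) - 1 / (4 * b ^ 2))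
          * (μ.re ^ 2 - μ.im ^ 2 + lam.re ^ 2 - lam.im ^ 2)) = 0 := by
      linear_combination hre0
    linarith [hpos, hX]
  -- conclusion
  obtain ⟨K, hK⟩ := (LinearMap.injective_iff_surjective.mp hinj) C
  refine ⟨K, ?_, ?_⟩
  · have hK' := hK
    rw [hLapp] at hK'
    exact hK'
  · intro y hy
    apply hinj
    rw [hLapp, hK]
    exact hy
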